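/- Let DB be a database over I with values in [N]^k, rsp a response (set of identifiers), and rsp* ⊆ rsp the subset of identifiers whose values are coordinatewise minimal or maximal among the values of rsp (as in the 2k-covering lemma). Then every response rsp'' of DB that contains rsp* must contain all of rsp; in particular, |rsp''| ≥ |rsp|, and if |rsp''| = |rsp| then rsp'' = rsp. -/
import Mathlib


open scoped Classical

abbrev Pt (N k : ℕ) := Fin k → Fin N

def covers {N k : ℕ} (a b v : Pt N k) : Prop := ∀ i, a i ≤ v i ∧ v i ≤ b i

noncomputable def response {N k : ℕ} {I : Type*} [Fintype I]
    (DB : I → Pt N k) (q : Pt N k × Pt N k) : Finset I :=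
  Finset.univ.filter (fun id => covers q.1 q.2 (DB id))

/-- The records of `rsp` whose values are coordinatewise minimal or maximal among the
values of the records in `rsp`. -/
noncomputable def extremes {N k : ℕ} {I : Type*} [Fintype I]
    (DB : I → Pt N k) (rsp : Finset I) : Finset I :=
  rsp.filter (fun id => ∃ i : Fin k,
    (∀ id' ∈ rsp, DB id i ≤ DB id' i) ∨ (∀ id' ∈ rsp, DB id' i ≤ DB id i))

/-- Let `rsp` be a response of `DB` and `rsp*` its subset of coordinatewise extremal records.
Every response `rsp''` of `DB` containing `rsp*` contains all of `rsp`; hence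
`|rsp''| ≥ |rsp|`, and if `|rsp''| = |rsp|` then `rsp'' = rsp`. -/
lemma mem_response' {N k : ℕ} {I : Type*} [Fintype I] (DB : I → Pt N k)
    (q : Pt N k × Pt N k) (id : I) : id ∈ response DB q ↔ covers q.1 q.2 (DB id) := by
  simp [response]

lemma mem_extremes' {N k : ℕ} {I : Type*} [Fintype I] (DB : I → Pt N k)
    (rsp : Finset I) (id : I) : id ∈ extremes DB rsp ↔ id ∈ rsp ∧ ∃ i : Fin k,
    (∀ id' ∈ rsp, DB id i ≤ DB id' i) ∨ (∀ id' ∈ rsp, DB id' i ≤ DB id i) := by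
  simp [extremes]

theorem stmt14 (N k : ℕ) (I : Type*) [Fintype I] [DecidableEq I]
    (DB : I → Pt N k)
    (q0 : Pt N k × Pt N k) (hq0 : q0.1 ≤ q0.2) (rsp : Finset I)
    (hrsp : rsp = response DB q0)
    (q : Pt N k × Pt N k) (hq : q.1 ≤ q.2) (rsp'' : Finset I)
    (hrsp'' : rsp'' = response DB q)
    (hsub : extremes DB rsp ⊆ rsp'') :
    rsp ⊆ rsp'' ∧ rsp.card ≤ rsp''.card ∧ (rsp''.card = rsp.card → rsp'' = rsp) := by
  have hmain : rsp ⊆ rsp'' := by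
    intro id hid
    have hne : rsp.Nonempty := ⟨id, hid⟩
    rw [hrsp'', mem_response']
    intro i
    obtain ⟨a, ha, hamin⟩ := rsp.exists_min_image (fun id' => DB id' i) hne
    obtain ⟨b, hb, hbmax⟩ := rsp.exists_max_image (fun id' => DB id' i) hne
    have haE : a ∈ rsp'' := hsub ((mem_extremes' DB rsp a).2 ⟨ha, ⟨i, Or.inl hamin⟩⟩)
    have hbE : b ∈ rsp'' := hsub ((mem_extremes' DB rsp b).2 ⟨hb, ⟨i, Or.inr hbmax⟩⟩)
    rw [hrsp'', mem_response'] at haE hbE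
    exact ⟨le_trans (haE i).1 (hamin id hid), le_trans (hbmax id hid) (hbE i).2⟩
  refine ⟨hmain, Finset.card_le_card hmain, fun hc => ?_⟩
  exact (Finset.eq_of_subset_of_card_le hmain (le_of_eq hc)).symm
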